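/- Consider an improving k-swap of type-2 from σ to σ'. Then Φ(σ) − Φ(σ') ≥ 4 · δ_min. -/

import Mathlib

open Finset

/-- The load of machine `i` under schedule `σ` with processing times `p`. -/
noncomputable def load {n m : ℕ} (p : Fin n → ℝ) (σ : Fin n → Fin m) (i : Fin m) : ℝ :=
  ∑ j ∈ Finset.univ.filter (fun j => σ j = i), p j

/-- The makespan (maximum machine load) of schedule `σ`. -/
noncomputable def Lmax {n m : ℕ} (p : Fin n → ℝ) (σ : Fin n → Fin m) : ℝ :=
  ⨆ i, load p σ i

/-- `δ_min`: the minimum of `|p(A) - p(B)|` over disjoint finsets of jobs `A`, `B`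
with `1 ≤ |A| + |B| ≤ k`. -/
noncomputable def deltaMin (n k : ℕ) (p : Fin n → ℝ) : ℝ :=
  sInf { x | ∃ A B : Finset (Fin n), Disjoint A B ∧ 1 ≤ A.card + B.card ∧
    A.card + B.card ≤ k ∧ x = |∑ j ∈ A, p j - ∑ j ∈ B, p j| }

/-- An improving `k`-swap from `σ` to `σ'`, with critical machine `i`, machine `i' ≠ i`,
and disjoint job sets `A ⊆ σ⁻¹ {i}`, `B ⊆ σ⁻¹ {i'}` with `|A| ≥ 1`, `|A| + |B| ≤ k` and
`0 < p(A) - p(B) < L_i(σ) - L_{i'}(σ)`; `σ'` sends `A` to `i'`, `B` to `i`, and agrees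
with `σ` elsewhere. -/
def IsImprovingKSwap (k : ℕ) {n m : ℕ} (p : Fin n → ℝ) (σ σ' : Fin n → Fin m)
    (i i' : Fin m) (A B : Finset (Fin n)) : Prop :=
  load p σ i = Lmax p σ ∧
  i' ≠ i ∧
  Disjoint A B ∧
  (∀ j ∈ A, σ j = i) ∧ (∀ j ∈ B, σ j = i') ∧
  1 ≤ A.card ∧ A.card + B.card ≤ k ∧
  0 < (∑ j ∈ A, p j) - ∑ j ∈ B, p j ∧
  (∑ j ∈ A, p j) - (∑ j ∈ B, p j) < load p σ i - load p σ i' ∧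
  (∀ j ∈ A, σ' j = i') ∧ (∀ j ∈ B, σ' j = i) ∧
  ∀ j, j ∉ A → j ∉ B → σ' j = σ j

/-- The set `γ_s(σ)` of machines whose load is at most `L_max(σ) - δ_min`. -/
noncomputable def gammaS (k : ℕ) {n m : ℕ} (p : Fin n → ℝ) (σ : Fin n → Fin m) :
    Finset (Fin m) :=
  Finset.univ.filter (fun i => load p σ i ≤ Lmax p σ - deltaMin n k p)

/-- The potential `Φ(σ) = ∑_{(i,i')} |L_i(σ) - L_{i'}(σ)|` over ordered pairs of machines. -/
noncomputable def potential {n m : ℕ} (p : Fin n → ℝ) (σ : Fin n → Fin m) : ℝ :=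
  ∑ i : Fin m, ∑ i' : Fin m, |load p σ i - load p σ i'|


/-- An improving `k`-swap of type-2 (i.e. `i' ∈ γ_s(σ')`) decreases the potential `Φ`
by at least `4 δ_min`. -/
private lemma key1 (li l2 Δ δ : ℝ) (h1 : Δ + δ ≤ li - l2) (h2 : δ ≤ Δ) (h3 : 0 < δ) :
    2 * δ ≤ |li - l2| - |(li - Δ) - (l2 + Δ)| := by
  have habs : |li - l2| = li - l2 := abs_of_pos (by linarith)
  rcases abs_cases ((li - Δ) - (l2 + Δ)) with ⟨e, _⟩ | ⟨e, _⟩ <;> linarith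

private lemma key2 (li l2 lh Δ δ : ℝ) (h1 : Δ + δ ≤ li - l2) (h2 : δ ≤ Δ) (h3 : 0 < δ)
    (h4 : lh ≤ li) :
    0 ≤ (|li - lh| - |(li - Δ) - lh|) + (|l2 - lh| - |(l2 + Δ) - lh|) := by
  have habs : |li - lh| = li - lh := abs_of_nonneg (by linarith)
  rcases abs_cases ((li - Δ) - lh) with ⟨e1, f1⟩ | ⟨e1, f1⟩ <;>
    rcases abs_cases (l2 - lh) with ⟨e2, f2⟩ | ⟨e2, f2⟩ <;>
      rcases abs_cases ((l2 + Δ) - lh) with ⟨e3, f3⟩ | ⟨e3, f3⟩ <;> linarith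
theorem potential_decrease_type2 {n m k : ℕ} (hm : 2 ≤ m) (hk : 1 ≤ k)
    (p : Fin n → ℝ) (hp : ∀ j, 0 < p j) (hδ : 0 < deltaMin n k p)
    (σ σ' : Fin n → Fin m) (i i' : Fin m) (A B : Finset (Fin n))
    (hswap : IsImprovingKSwap k p σ σ' i i' A B)
    (htype2 : i' ∈ gammaS k p σ') :
    potential p σ - potential p σ' ≥ 4 * deltaMin n k p := by
  haveI : Nonempty (Fin m) := ⟨⟨0, by omega⟩⟩
  obtain ⟨hcrit, hne, hAB, hAi, hBi', hA1, hk', hpos, hlt, hA'i', hB'i, hother⟩ := hswap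
  set δ := deltaMin n k p with hδdef
  set Δ := (∑ j ∈ A, p j) - ∑ j ∈ B, p j with hΔdef
  -- δ ≤ Δ
  have hδΔ : δ ≤ Δ := by
    have hmem : Δ ∈ { x : ℝ | ∃ A B : Finset (Fin n), Disjoint A B ∧ 1 ≤ A.card + B.card ∧
        A.card + B.card ≤ k ∧ x = |∑ j ∈ A, p j - ∑ j ∈ B, p j| } := by
      exact ⟨A, B, hAB, by omega, hk', (abs_of_pos hpos).symm⟩
    have hbdd : BddBelow { x : ℝ | ∃ A B : Finset (Fin n), Disjoint A B ∧ 1 ≤ A.card + B.card ∧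
        A.card + B.card ≤ k ∧ x = |∑ j ∈ A, p j - ∑ j ∈ B, p j| } := by
      refine ⟨0, ?_⟩
      rintro x ⟨A, B, -, -, -, rfl⟩
      exact abs_nonneg _
    exact csInf_le hbdd hmem
  -- load changes
  have hBnotI : ∀ j ∈ B, σ j ≠ i := fun j hj => by rw [hBi' j hj]; exact hne
  have hload_i : load p σ' i = load p σ i - Δ := by
    have hset : Finset.univ.filter (fun j => σ' j = i)
        = (Finset.univ.filter (fun j => σ j = i) \ A) ∪ B := by
      ext j
      simp only [Finset.mem_union, Finset.mem_sdiff, Finset.mem_filter, Finset.mem_univ,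
        true_and]
      constructor
      · intro hj
        by_cases hjA : j ∈ A
        · exact absurd hj (by rw [hA'i' j hjA]; exact hne)
        by_cases hjB : j ∈ B
        · exact Or.inr hjB
        · exact Or.inl ⟨(hother j hjA hjB) ▸ hj, hjA⟩
      · rintro (⟨hji, hjA⟩ | hjB)
        · by_cases hjB : j ∈ B
          · exact hB'i j hjB
          · rw [hother j hjA hjB]; exact hji
        · exact hB'i j hjB
    have hdisj : Disjoint (Finset.univ.filter (fun j => σ j = i) \ A) B := by
      refine Finset.disjoint_left.2 ?_
      rintro j hj hjB
      exact hBnotI j hjB (Finset.mem_filter.1 (Finset.mem_sdiff.1 hj).1).2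
    have hsub : A ⊆ Finset.univ.filter (fun j => σ j = i) := fun j hj =>
      Finset.mem_filter.2 ⟨Finset.mem_univ j, hAi j hj⟩
    rw [load, hset, Finset.sum_union hdisj, Finset.sum_sdiff_eq_sub hsub]
    rw [hΔdef, load]; ring
  have hload_i' : load p σ' i' = load p σ i' + Δ := by
    have hANotI' : ∀ j ∈ A, σ j ≠ i' := fun j hj => by
      rw [hAi j hj]; exact fun h => hne h.symm
    have hset : Finset.univ.filter (fun j => σ' j = i')
        = (Finset.univ.filter (fun j => σ j = i') \ B) ∪ A := by
      ext j
      simp only [Finset.mem_union, Finset.mem_sdiff, Finset.mem_filter, Finset.mem_univ,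
        true_and]
      constructor
      · intro hj
        by_cases hjB : j ∈ B
        · exact absurd hj (by rw [hB'i j hjB]; exact fun h => hne h.symm)
        by_cases hjA : j ∈ A
        · exact Or.inr hjA
        · exact Or.inl ⟨(hother j hjA hjB) ▸ hj, hjB⟩
      · rintro (⟨hji, hjB⟩ | hjA)
        · by_cases hjA : j ∈ A
          · exact hA'i' j hjA
          · rw [hother j hjA hjB]; exact hji
        · exact hA'i' j hjA
    have hdisj : Disjoint (Finset.univ.filter (fun j => σ j = i') \ B) A := by
      refine Finset.disjoint_left.2 ?_
      rintro j hj hjA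
      exact hANotI' j hjA (Finset.mem_filter.1 (Finset.mem_sdiff.1 hj).1).2
    have hsub : B ⊆ Finset.univ.filter (fun j => σ j = i') := fun j hj =>
      Finset.mem_filter.2 ⟨Finset.mem_univ j, hBi' j hj⟩
    rw [load, hset, Finset.sum_union hdisj, Finset.sum_sdiff_eq_sub hsub]
    rw [hΔdef, load]; ring
  have hload_other : ∀ h : Fin m, h ≠ i → h ≠ i' → load p σ' h = load p σ h := by
    intro h hhi hhi'
    have hset : Finset.univ.filter (fun j => σ' j = h)
        = Finset.univ.filter (fun j => σ j = h) := by
      ext j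
      simp only [Finset.mem_filter, Finset.mem_univ, true_and]
      by_cases hjA : j ∈ A
      · rw [hA'i' j hjA, hAi j hjA]
        constructor
        · exact fun hh => absurd hh.symm hhi'
        · exact fun hh => absurd hh.symm hhi
      by_cases hjB : j ∈ B
      · rw [hB'i j hjB, hBi' j hjB]
        constructor
        · exact fun hh => absurd hh.symm hhi
        · exact fun hh => absurd hh.symm hhi'
      · rw [hother j hjA hjB]
    rw [load, load, hset]
  -- makespan facts
  have hle : ∀ h : Fin m, load p σ h ≤ load p σ i := by
    intro h
    rw [hcrit]
    exact le_ciSup (Set.Finite.bddAbove (Set.finite_range _)) h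
  have hLmax' : Lmax p σ' ≤ load p σ i := by
    refine ciSup_le fun h => ?_
    by_cases hhi : h = i
    · subst hhi; rw [hload_i]; linarith
    by_cases hhi' : h = i'
    · rw [hhi', hload_i']; linarith [hle i']
    · rw [hload_other h hhi hhi']; exact hle h
  have htype2' : load p σ i' + Δ ≤ load p σ i - δ := by
    have := (Finset.mem_filter.1 htype2).2
    rw [hload_i'] at this
    linarith
  have hkey : Δ + δ ≤ load p σ i - load p σ i' := by linarith
  -- potential difference as a double sum
  set L : Fin m → ℝ := load p σ with hL
  set L' : Fin m → ℝ := load p σ' with hL'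
  set F : Fin m → Fin m → ℝ := fun a b => |L a - L b| - |L' a - L' b| with hF
  have hdiff : potential p σ - potential p σ' = ∑ a : Fin m, ∑ b : Fin m, F a b := by
    rw [potential, potential, ← Finset.sum_sub_distrib]
    exact Finset.sum_congr rfl fun a _ => by rw [← Finset.sum_sub_distrib]
  rw [ge_iff_le, hdiff]
  have hi'mem : i' ∈ Finset.univ.erase i := Finset.mem_erase.2 ⟨hne, Finset.mem_univ i'⟩
  set rest : Finset (Fin m) := (Finset.univ.erase i).erase i' with hrest
  have hrestne : ∀ h ∈ rest, h ≠ i ∧ h ≠ i' := by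
    intro h hh
    obtain ⟨h1, h2⟩ := Finset.mem_erase.1 hh
    exact ⟨(Finset.mem_erase.1 h2).1, h1⟩
  have hsplit : ∀ f : Fin m → ℝ, ∑ a : Fin m, f a = f i + f i' + ∑ a ∈ rest, f a := by
    intro f
    rw [← Finset.add_sum_erase _ f (Finset.mem_univ i), ← Finset.add_sum_erase _ f hi'mem,
      ← add_assoc]
  -- F is zero off the swap machines
  have hFzero : ∀ a ∈ rest, ∀ b ∈ rest, F a b = 0 := by
    intro a ha b hb
    obtain ⟨ha1, ha2⟩ := hrestne a ha
    obtain ⟨hb1, hb2⟩ := hrestne b hb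
    simp only [hF]
    rw [hload_other a ha1 ha2, hload_other b hb1 hb2, sub_self]
  have hFselfi : F i i = 0 := by simp [hF]
  have hFselfi' : F i' i' = 0 := by simp [hF]
  -- key bounds
  have hDii' : 2 * δ ≤ F i i' := by
    simp only [hF]
    rw [hload_i, hload_i']
    exact key1 (L i) (L i') Δ δ hkey hδΔ hδ
  have hDi'i : 2 * δ ≤ F i' i := by
    have h0 : F i' i = F i i' := by
      simp only [hF, abs_sub_comm (L i') (L i), abs_sub_comm (L' i') (L' i)]
    rw [h0]; exact hDii'
  have hpair : ∀ h ∈ rest, 0 ≤ F i h + F i' h := by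
    intro h hh
    obtain ⟨h1, h2⟩ := hrestne h hh
    simp only [hF]
    rw [hload_i, hload_i', hload_other h h1 h2]
    have := key2 (L i) (L i') (L h) Δ δ hkey hδΔ hδ (hle h)
    linarith
  have hpair' : ∀ h ∈ rest, 0 ≤ F h i + F h i' := by
    intro h hh
    have e1 : F h i = F i h := by
      simp only [hF, abs_sub_comm (L h) (L i), abs_sub_comm (L' h) (L' i)]
    have e2 : F h i' = F i' h := by
      simp only [hF, abs_sub_comm (L h) (L i'), abs_sub_comm (L' h) (L' i')]
    rw [e1, e2]
    linarith [hpair h hh]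
  -- assemble
  rw [hsplit (fun a => ∑ b : Fin m, F a b)]
  rw [hsplit (F i), hsplit (F i')]
  have hrest_sum : ∑ a ∈ rest, ∑ b : Fin m, F a b = ∑ a ∈ rest, (F a i + F a i') := by
    refine Finset.sum_congr rfl fun a ha => ?_
    rw [hsplit (F a), Finset.sum_eq_zero (hFzero a ha), add_zero]
  rw [hrest_sum]
  have h1 : 0 ≤ ∑ a ∈ rest, (F a i + F a i') := Finset.sum_nonneg hpair'
  have h2 : 0 ≤ ∑ b ∈ rest, F i b + ∑ b ∈ rest, F i' b := by
    rw [← Finset.sum_add_distrib]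
    exact Finset.sum_nonneg hpair
  linarith
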